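/- Let d ≥ 1 be an integer, σ, μ > 0, R > 0, ε > 0, and ᾱ ∈ (0,1). Define φ(x) = −2(1−x)³ + 3(1−x)² and γ : [0,∞) → ℝ by γ(r) = ᾱ for 0 ≤ r ≤ R, γ(r) = ᾱ·φ((r−R)/(εR)) for R < r ≤ (1+ε)R, and γ(r) = 0 for r > (1+ε)R. Then: (i) γ is continuously differentiable on [0,∞), nonincreasing, with 0 ≤ γ ≤ ᾱ, support contained in [0,(1+ε)R], and γ ≡ ᾱ on [0,R]; (ii) if 6/ε² + 3(d−1)/(2ε) ≤ R²·μ·(1−ᾱ)/(σᾱ), then for every r ∈ (R,(1+ε)R), σ·|γ''(r) + ((d−1)/r)·γ'(r)| ≤ μ·(1 − γ(r)); i.e., the radial Laplacian of γ satisfies |σΔγ| ≤ μ(1−γ) on the annulus R < |x| < (1+ε)R. -/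

import Mathlib

open Set

/-- The cubic cut-off profile `φ(x) = -2(1-x)³ + 3(1-x)²`. -/
noncomputable def profPhi (x : ℝ) : ℝ := -2 * (1 - x) ^ 3 + 3 * (1 - x) ^ 2

/-- The radial profile `γ`: equal to `ᾱ` on `[0,R]`, to `ᾱ φ((r-R)/(εR))` on
`(R,(1+ε)R]`, and `0` beyond. -/
noncomputable def gammaProf (ᾱ R ε : ℝ) (r : ℝ) : ℝ :=
  if r ≤ R then ᾱ
  else if r ≤ (1 + ε) * R then ᾱ * profPhi ((r - R) / (ε * R))
  else 0

lemma profPhi_hasDerivAt (x : ℝ) : HasDerivAt profPhi (-6 * x * (1 - x)) x := by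
  have h1 : HasDerivAt (fun y : ℝ => (1 - y)) (-1) x := by
    simpa using (hasDerivAt_id x).const_sub 1
  have := ((h1.pow 3).const_mul (-2 : ℝ)).add ((h1.pow 2).const_mul (3 : ℝ))
  refine this.congr_deriv ?_
  ring

lemma profPhi_zero : profPhi 0 = 1 := by norm_num [profPhi]
lemma profPhi_one : profPhi 1 = 0 := by norm_num [profPhi]

noncomputable def gammaD (ᾱ R ε r : ℝ) : ℝ :=
  if R ≤ r ∧ r ≤ (1 + ε) * R then
    ᾱ * (-6 * ((r - R) / (ε * R)) * (1 - (r - R) / (ε * R))) * (ε * R)⁻¹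
  else 0

lemma gammaProf_hasDerivAt (ᾱ R ε : ℝ) (hR : 0 < R) (hε : 0 < ε) (r : ℝ) :
    HasDerivAt (gammaProf ᾱ R ε) (gammaD ᾱ R ε r) r := by
  have hc : (0:ℝ) < ε * R := mul_pos hε hR
  have hc' : (ε * R) ≠ 0 := ne_of_gt hc
  have hRb : R < (1 + ε) * R := by nlinarith
  set f : ℝ → ℝ := fun x => ᾱ * profPhi ((x - R) / (ε * R)) with hf
  have hfderiv : ∀ x : ℝ, HasDerivAt f
      (ᾱ * (-6 * ((x - R)/(ε*R)) * (1 - (x - R)/(ε*R))) * (ε*R)⁻¹) x := by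
    intro x
    have hu : HasDerivAt (fun y : ℝ => (y - R)/(ε*R)) ((ε*R)⁻¹) x := by
      simpa [one_div] using ((hasDerivAt_id x).sub_const R).div_const (ε*R)
    have := ((profPhi_hasDerivAt ((x - R)/(ε*R))).comp x hu).const_mul ᾱ
    simpa [Function.comp, mul_assoc] using this
  rcases lt_trichotomy r R with h | h | h
  · have hD : gammaD ᾱ R ε r = 0 := by
      rw [gammaD, if_neg]; rintro ⟨h1, -⟩; exact absurd h1 (not_le.2 h)
    rw [hD]
    refine (hasDerivAt_const r ᾱ).congr_of_eventuallyEq ?_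
    filter_upwards [Iio_mem_nhds h] with x hx
    simp [gammaProf, (mem_Iio.1 hx).le]
  · subst h
    have hD : gammaD ᾱ r ε r = 0 := by
      rw [gammaD, if_pos ⟨le_refl r, hRb.le⟩]; simp
    rw [hD]
    rw [← hasDerivWithinAt_univ, ← Iic_union_Ici (a := r)]
    refine HasDerivWithinAt.union ?_ ?_
    · refine (hasDerivWithinAt_const r _ ᾱ).congr ?_ ?_
      · intro x hx; simp [gammaProf, mem_Iic.1 hx]
      · simp [gammaProf]
    · have h0 : ᾱ * (-6 * ((r - r)/(ε*r)) * (1 - (r - r)/(ε*r))) * (ε*r)⁻¹ = 0 := by simp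
      refine HasDerivWithinAt.congr_of_eventuallyEq (h0 ▸ (hfderiv r).hasDerivWithinAt)
        ?_ (by simp [gammaProf, hf, profPhi_zero])
      filter_upwards [inter_mem_nhdsWithin (Ici r) (Iio_mem_nhds hRb)] with x hx
      rcases hx with ⟨hx1, hx2⟩
      rcases eq_or_lt_of_le (mem_Ici.1 hx1) with hxe | hxl
      · simp [gammaProf, hf, ← hxe, profPhi_zero]
      · simp [gammaProf, hf, not_le.2 hxl, (mem_Iio.1 hx2).le]
  · rcases lt_trichotomy r ((1 + ε) * R) with h2 | h2 | h2
    · have hD : gammaD ᾱ R ε r =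
          ᾱ * (-6 * ((r - R)/(ε*R)) * (1 - (r - R)/(ε*R))) * (ε*R)⁻¹ := by
        rw [gammaD, if_pos ⟨h.le, h2.le⟩]
      rw [hD]
      refine (hfderiv r).congr_of_eventuallyEq ?_
      filter_upwards [Ioo_mem_nhds h h2] with x hx
      simp [gammaProf, hf, not_le.2 hx.1, hx.2.le]
    · subst h2
      have hbR : (1 + ε) * R - R = ε * R := by ring
      have hu1 : ((1 + ε) * R - R) / (ε * R) = 1 := by rw [hbR, div_self hc']
      have hD : gammaD ᾱ R ε ((1 + ε) * R) = 0 := by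
        rw [gammaD, if_pos ⟨hRb.le, le_refl _⟩, hu1]; ring
      rw [hD]
      rw [← hasDerivWithinAt_univ, ← Iic_union_Ici (a := (1 + ε) * R)]
      refine HasDerivWithinAt.union ?_ ?_
      · have h0 : ᾱ * (-6 * (((1+ε)*R - R)/(ε*R)) * (1 - ((1+ε)*R - R)/(ε*R))) * (ε*R)⁻¹
            = 0 := by rw [hu1]; ring
        refine HasDerivWithinAt.congr_of_eventuallyEq
          (h0 ▸ (hfderiv ((1+ε)*R)).hasDerivWithinAt)
          ?_ (by simp [gammaProf, hf, not_le.2 hRb, hu1, profPhi_one])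
        filter_upwards [inter_mem_nhdsWithin (Iic ((1+ε)*R)) (Ioi_mem_nhds hRb)] with x hx
        rcases hx with ⟨hx1, hx2⟩
        simp [gammaProf, hf, not_le.2 (mem_Ioi.1 hx2), mem_Iic.1 hx1]
      · refine (hasDerivWithinAt_const _ _ (0:ℝ)).congr ?_
          (by simp [gammaProf, not_le.2 hRb, hu1, profPhi_one])
        intro x hx
        rcases eq_or_lt_of_le (mem_Ici.1 hx) with hxe | hxl
        · simp [gammaProf, ← hxe, not_le.2 hRb, hu1, profPhi_one]
        · have : ¬ x ≤ R := not_le.2 (hRb.trans hxl)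
          simp [gammaProf, this, not_le.2 hxl]
    · have hD : gammaD ᾱ R ε r = 0 := by
        rw [gammaD, if_neg]; rintro ⟨-, h1⟩; exact absurd h1 (not_le.2 h2)
      rw [hD]
      refine (hasDerivAt_const r (0:ℝ)).congr_of_eventuallyEq ?_
      filter_upwards [Ioi_mem_nhds h2] with x hx
      have : ¬ x ≤ R := not_le.2 (hRb.trans hx)
      simp [gammaProf, this, not_le.2 (mem_Ioi.1 hx)]

lemma gammaD_cont (ᾱ R ε : ℝ) (hR : 0 < R) (hε : 0 < ε) : Continuous (gammaD ᾱ R ε) := by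
  have hc : (0:ℝ) < ε * R := mul_pos hε hR
  have hc' : (ε * R) ≠ 0 := ne_of_gt hc
  have hRb : R < (1 + ε) * R := by nlinarith
  unfold gammaD
  refine Continuous.if ?_ (by fun_prop) continuous_const
  intro a ha
  have hset : {x : ℝ | R ≤ x ∧ x ≤ (1+ε)*R} = Icc R ((1+ε)*R) := rfl
  rw [hset, frontier_Icc hRb.le] at ha
  simp only [mem_insert_iff, mem_singleton_iff] at ha
  rcases ha with ha | ha
  · simp [ha]
  · subst ha
    have hu1 : ((1 + ε) * R - R) / (ε * R) = 1 := by
      rw [show (1 + ε) * R - R = ε * R by ring, div_self hc']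
    rw [hu1]; ring

lemma gammaProf_contDiff (ᾱ R ε : ℝ) (hR : 0 < R) (hε : 0 < ε) :
    ContDiff ℝ 1 (gammaProf ᾱ R ε) := by
  rw [contDiff_one_iff_deriv]
  have hd : deriv (gammaProf ᾱ R ε) = gammaD ᾱ R ε :=
    funext fun r => (gammaProf_hasDerivAt ᾱ R ε hR hε r).deriv
  exact ⟨fun r => (gammaProf_hasDerivAt ᾱ R ε hR hε r).differentiableAt,
    hd ▸ gammaD_cont ᾱ R ε hR hε⟩

lemma gammaD_nonpos (ᾱ R ε : ℝ) (hᾱ : 0 ≤ ᾱ) (hR : 0 < R) (hε : 0 < ε) (r : ℝ) :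
    gammaD ᾱ R ε r ≤ 0 := by
  have hc : (0:ℝ) < ε * R := mul_pos hε hR
  unfold gammaD; split
  · rename_i hcond
    obtain ⟨h1, h2⟩ := hcond
    have hu0 : 0 ≤ (r - R)/(ε*R) := div_nonneg (by linarith) hc.le
    have hu1 : (r - R)/(ε*R) ≤ 1 := by rw [div_le_one hc]; nlinarith
    have hX : -6 * ((r-R)/(ε*R)) * (1 - (r-R)/(ε*R)) ≤ 0 := by nlinarith
    have := mul_nonpos_of_nonneg_of_nonpos (mul_nonneg hᾱ (inv_pos.2 hc).le) hX
    nlinarith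
  · exact le_refl 0

lemma est1 (a i u : ℝ) (ha : 0 ≤ a) (hi : 0 ≤ i) (h0 : 0 ≤ u) (h1 : u ≤ 1) :
    |a * ((-6 + 12 * u) * i) * i| ≤ a * 6 * i * i := by
  rw [abs_le]
  constructor
  · nlinarith [mul_nonneg (mul_nonneg (mul_nonneg ha hi) hi) h0]
  · nlinarith [mul_nonneg (mul_nonneg (mul_nonneg ha hi) hi) (by linarith : (0:ℝ) ≤ 1 - u)]

lemma est2 (a i u k K : ℝ) (ha : 0 ≤ a) (hi : 0 ≤ i) (h0 : 0 ≤ u) (h1 : u ≤ 1)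
    (hk : 0 ≤ k) (hkK : k ≤ K) :
    |k * (a * (-6 * u * (1 - u)) * i)| ≤ K * (a * (3/2) * i) := by
  have h32 : 6 * u * (1 - u) ≤ 3/2 := by nlinarith [sq_nonneg (u - 1/2)]
  rw [abs_le]
  constructor
  · nlinarith [mul_nonneg (mul_nonneg ha hi) (sub_nonneg.2 hkK),
      mul_nonneg (mul_nonneg (mul_nonneg ha hi) hk)
        (by linarith : (0:ℝ) ≤ 3/2 - 6 * u * (1 - u))]
  · nlinarith [mul_nonneg (mul_nonneg (mul_nonneg ha hi) hk)
      (mul_nonneg h0 (by linarith : (0:ℝ) ≤ 1 - u)),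
      mul_nonneg (mul_nonneg ha hi) (sub_nonneg.2 hkK),
      mul_nonneg (mul_nonneg ha hi) hk]


/-- Properties of the radial subsolution profile `γ`:
(i) it is C¹ on `[0,∞)`, nonincreasing, with values in `[0,ᾱ]`, support in
`[0,(1+ε)R]` and identically `ᾱ` on `[0,R]`;
(ii) if `6/ε² + 3(d-1)/(2ε) ≤ R²μ(1-ᾱ)/(σᾱ)` then the radial Laplacian of `γ`
satisfies `σ|γ'' + ((d-1)/r)γ'| ≤ μ(1-γ)` on the annulus `R < r < (1+ε)R`. -/
theorem gamma_profile_properties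
    (d : ℕ) (hd : 1 ≤ d) (σ μ R ε ᾱ : ℝ) (hσ : 0 < σ) (hμ : 0 < μ)
    (hR : 0 < R) (hε : 0 < ε) (hᾱ : ᾱ ∈ Set.Ioo (0:ℝ) 1) :
    (ContDiffOn ℝ 1 (gammaProf ᾱ R ε) (Set.Ici 0) ∧
     AntitoneOn (gammaProf ᾱ R ε) (Set.Ici 0) ∧
     (∀ r ≥ (0:ℝ), gammaProf ᾱ R ε r ∈ Set.Icc 0 ᾱ) ∧
     (∀ r > (1 + ε) * R, gammaProf ᾱ R ε r = 0) ∧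
     (∀ r ∈ Set.Icc (0:ℝ) R, gammaProf ᾱ R ε r = ᾱ)) ∧
    (6 / ε ^ 2 + 3 * ((d:ℝ) - 1) / (2 * ε) ≤ R ^ 2 * μ * (1 - ᾱ) / (σ * ᾱ) →
      ∀ r ∈ Set.Ioo R ((1 + ε) * R),
        σ * |deriv (deriv (gammaProf ᾱ R ε)) r
              + (((d:ℝ) - 1) / r) * deriv (gammaProf ᾱ R ε) r|
          ≤ μ * (1 - gammaProf ᾱ R ε r)) := by
  obtain ⟨hᾱ0, hᾱ1⟩ := hᾱ
  have hc : (0:ℝ) < ε * R := mul_pos hε hR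
  have hc' : (ε * R) ≠ 0 := ne_of_gt hc
  have hi : (0:ℝ) < (ε * R)⁻¹ := inv_pos.2 hc
  have hRb : R < (1 + ε) * R := by nlinarith
  have hderiv : deriv (gammaProf ᾱ R ε) = gammaD ᾱ R ε :=
    funext fun r => (gammaProf_hasDerivAt ᾱ R ε hR hε r).deriv
  have hCD := gammaProf_contDiff ᾱ R ε hR hε
  have hanti : AntitoneOn (gammaProf ᾱ R ε) (Ici 0) :=
    antitoneOn_of_deriv_nonpos (convex_Ici 0) hCD.continuous.continuousOn
      (fun x _ => (gammaProf_hasDerivAt ᾱ R ε hR hε x).differentiableAt.differentiableWithinAt)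
      (fun x _ => by rw [hderiv]; exact gammaD_nonpos ᾱ R ε hᾱ0.le hR hε x)
  have hval_b : gammaProf ᾱ R ε ((1+ε)*R) = 0 := by
    have hu1 : ((1 + ε) * R - R) / (ε * R) = 1 := by
      rw [show (1 + ε) * R - R = ε * R by ring, div_self hc']
    simp [gammaProf, not_le.2 hRb, hu1, profPhi_one]
  have hIcc : ∀ r ∈ Icc (0:ℝ) R, gammaProf ᾱ R ε r = ᾱ := fun r hr => by
    simp [gammaProf, hr.2]
  have hzero : ∀ r > (1+ε)*R, gammaProf ᾱ R ε r = 0 := fun r hr => by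
    have h1 : ¬ r ≤ R := not_le.2 (hRb.trans hr)
    simp [gammaProf, h1, not_le.2 hr]
  have hmem : ∀ r ≥ (0:ℝ), gammaProf ᾱ R ε r ∈ Icc 0 ᾱ := by
    intro r hr
    rcases le_or_gt r ((1+ε)*R) with h1 | h1
    · constructor
      · have h2 := hanti (mem_Ici.2 hr)
          (mem_Ici.2 (by positivity : (0:ℝ) ≤ (1+ε)*R)) h1
        rw [hval_b] at h2; exact h2
      · rcases le_or_gt r R with h3 | h3
        · rw [hIcc r ⟨hr, h3⟩]
        · have h4 := hanti (mem_Ici.2 hR.le) (mem_Ici.2 hr) h3.le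
          rwa [hIcc R ⟨hR.le, le_refl R⟩] at h4
    · rw [hzero r h1]; exact ⟨le_refl 0, hᾱ0.le⟩
  refine ⟨⟨hCD.contDiffOn, hanti, hmem, hzero, hIcc⟩, ?_⟩
  intro H r hr
  obtain ⟨hr1, hr2⟩ := hr
  have hr0 : (0:ℝ) < r := hR.trans hr1
  have hγ : gammaProf ᾱ R ε r ≤ ᾱ := (hmem r hr0.le).2
  have hd1 : deriv (gammaProf ᾱ R ε) r
      = ᾱ * (-6 * ((r - R)/(ε*R)) * (1 - (r - R)/(ε*R))) * (ε*R)⁻¹ := by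
    rw [hderiv, gammaD, if_pos ⟨hr1.le, hr2.le⟩]
  have hgl : HasDerivAt (fun x => ᾱ * (-6 * ((x - R)/(ε*R)) * (1 - (x - R)/(ε*R))) * (ε*R)⁻¹)
      (ᾱ * ((-6 + 12 * ((r - R)/(ε*R))) * (ε*R)⁻¹) * (ε*R)⁻¹) r := by
    have hud : HasDerivAt (fun y : ℝ => (y - R)/(ε*R)) ((ε*R)⁻¹) r := by
      simpa [one_div] using ((hasDerivAt_id r).sub_const R).div_const (ε*R)
    have h1 := (hud.const_mul (-6 : ℝ)).mul ((hasDerivAt_const r (1:ℝ)).sub hud)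
    have h2 := (h1.const_mul ᾱ).mul_const ((ε*R)⁻¹)
    refine h2.congr_deriv ?_
    simp only [Pi.sub_apply]
    ring
  have hd2 : deriv (deriv (gammaProf ᾱ R ε)) r
      = ᾱ * ((-6 + 12 * ((r - R)/(ε*R))) * (ε*R)⁻¹) * (ε*R)⁻¹ := by
    rw [hderiv]
    have heq : gammaD ᾱ R ε =ᶠ[nhds r]
        (fun x => ᾱ * (-6 * ((x - R)/(ε*R)) * (1 - (x - R)/(ε*R))) * (ε*R)⁻¹) := by
      filter_upwards [Ioo_mem_nhds hr1 hr2] with x hx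
      rw [gammaD, if_pos ⟨hx.1.le, hx.2.le⟩]
    rw [heq.deriv_eq]
    exact hgl.deriv
  rw [hd1, hd2]
  set u := (r - R) / (ε * R) with hu
  have hu0 : 0 < u := div_pos (by linarith) hc
  have hu1 : u < 1 := (div_lt_one hc).2 (by nlinarith)
  set kd := ((d:ℝ) - 1) with hkd
  have hkd0 : 0 ≤ kd := by
    have : (1:ℝ) ≤ (d:ℝ) := by exact_mod_cast hd
    simp [hkd]; linarith
  have hkr : 0 ≤ kd / r := div_nonneg hkd0 hr0.le
  have hkR : kd / r ≤ kd / R := by gcongr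
  have e1 : |ᾱ * ((-6 + 12 * u) * (ε*R)⁻¹) * (ε*R)⁻¹| ≤ ᾱ * 6 * (ε*R)⁻¹ * (ε*R)⁻¹ :=
    est1 ᾱ ((ε*R)⁻¹) u hᾱ0.le hi.le hu0.le hu1.le
  have e2 : |kd / r * (ᾱ * (-6 * u * (1 - u)) * (ε*R)⁻¹)| ≤ kd / R * (ᾱ * (3/2) * (ε*R)⁻¹) :=
    est2 ᾱ ((ε*R)⁻¹) u (kd/r) (kd/R) hᾱ0.le hi.le hu0.le hu1.le hkr hkR
  have hsum : |ᾱ * ((-6 + 12 * u) * (ε*R)⁻¹) * (ε*R)⁻¹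
        + kd / r * (ᾱ * (-6 * u * (1 - u)) * (ε*R)⁻¹)|
      ≤ ᾱ * 6 * (ε*R)⁻¹ * (ε*R)⁻¹ + kd / R * (ᾱ * (3/2) * (ε*R)⁻¹) :=
    (abs_add_le _ _).trans (add_le_add e1 e2)
  have hkey : ᾱ * 6 * (ε*R)⁻¹ * (ε*R)⁻¹ + kd / R * (ᾱ * (3/2) * (ε*R)⁻¹)
      = (ᾱ / R^2) * (6 / ε^2 + 3 * kd / (2 * ε)) := by
    field_simp
  have hH2 : (ᾱ / R^2) * (6 / ε^2 + 3 * kd / (2 * ε))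
      ≤ (ᾱ / R^2) * (R^2 * μ * (1 - ᾱ) / (σ * ᾱ)) :=
    mul_le_mul_of_nonneg_left H (by positivity)
  have hfin : (ᾱ / R^2) * (R^2 * μ * (1 - ᾱ) / (σ * ᾱ)) = μ * (1 - ᾱ) / σ := by
    field_simp
  calc σ * |ᾱ * ((-6 + 12 * u) * (ε*R)⁻¹) * (ε*R)⁻¹
        + kd / r * (ᾱ * (-6 * u * (1 - u)) * (ε*R)⁻¹)|
      ≤ σ * (μ * (1 - ᾱ) / σ) := by
        refine mul_le_mul_of_nonneg_left ?_ hσ.le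
        calc _ ≤ _ := hsum
          _ = _ := hkey
          _ ≤ _ := hH2
          _ = _ := hfin
    _ = μ * (1 - ᾱ) := by field_simp
    _ ≤ μ * (1 - gammaProf ᾱ R ε r) := by nlinarith
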